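/- Let d, χ, c, a' be positive reals with χ > d, and define ρ : ℝ → ℝ by ρ(z) = a' exp(−(c/d) z) (1 + exp(−(c/d) z))^{χ/(d−χ)}, and S : ℝ → ℝ by S(z) = S_init (1 + exp(−(c/d) z))^{d/(d−χ)} for some S_init > 0. Then ρ is positive, integrable over ℝ, ρ(z) → 0 as z → ±∞, and for every z ∈ ℝ the zero-flux relation −c ρ(z) − d ρ'(z) + χ ρ(z) S'(z)/S(z) = 0 holds. -/
import Mathlib


open MeasureTheory Filter

/-- Explicit density profile of the Keller–Segel traveling wave (D = 0). -/
theorem stmt_2 (d χ c a' S_init : ℝ) (hd : 0 < d) (hχ : 0 < χ) (hc : 0 < c)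
    (ha' : 0 < a') (hS_init : 0 < S_init) (hχd : d < χ)
    (ρ S : ℝ → ℝ)
    (hρ : ∀ z, ρ z = a' * Real.exp (-(c / d) * z) *
        (1 + Real.exp (-(c / d) * z)) ^ (χ / (d - χ)))
    (hS : ∀ z, S z = S_init * (1 + Real.exp (-(c / d) * z)) ^ (d / (d - χ))) :
    (∀ z, 0 < ρ z) ∧ Integrable ρ ∧
    Tendsto ρ atBot (nhds 0) ∧ Tendsto ρ atTop (nhds 0) ∧
    (∀ z, -c * ρ z - d * deriv ρ z + χ * ρ z * (deriv S z / S z) = 0) := by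
  have hdχ : d - χ < 0 := by linarith
  have hdχne : d - χ ≠ 0 := ne_of_lt hdχ
  set α : ℝ := c / d with hα
  have hαpos : 0 < α := div_pos hc hd
  set β : ℝ := χ / (d - χ) with hβdef
  have hβneg : β < 0 := div_neg_of_pos_of_neg hχ hdχ
  have h1β : 1 + β = d / (d - χ) := by
    rw [hβdef, add_div' _ _ _ hdχne]; congr 1; ring
  have h1βneg : 1 + β < 0 := by rw [h1β]; exact div_neg_of_pos_of_neg hd hdχ
  -- basic quantities
  have hupos : ∀ z : ℝ, 0 < Real.exp (-α * z) := fun z => Real.exp_pos _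
  have hbpos : ∀ z : ℝ, 0 < 1 + Real.exp (-α * z) := fun z => by positivity
  have hbne : ∀ z : ℝ, 1 + Real.exp (-α * z) ≠ 0 := fun z => (hbpos z).ne'
  -- positivity
  have hpos : ∀ z, 0 < ρ z := by
    intro z
    rw [hρ z]
    exact mul_pos (mul_pos ha' (hupos z)) (Real.rpow_pos_of_pos (hbpos z) _)
  -- upper bounds
  have hbound1 : ∀ z, ρ z ≤ a' * Real.exp (-α * z) := by
    intro z
    rw [hρ z]
    have : (1 + Real.exp (-α * z)) ^ β ≤ 1 :=
      Real.rpow_le_one_of_one_le_of_nonpos (by nlinarith [(hupos z).le]) hβneg.le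
    nlinarith [mul_pos ha' (hupos z), Real.rpow_pos_of_pos (hbpos z) β]
  have hbound2 : ∀ z, ρ z ≤ a' * Real.exp ((-α * (1 + β)) * z) := by
    intro z
    rw [hρ z]
    have h1 : (1 + Real.exp (-α * z)) ^ β ≤ (Real.exp (-α * z)) ^ β :=
      Real.rpow_le_rpow_of_nonpos (hupos z) (by nlinarith) hβneg.le
    have h2 : a' * Real.exp (-α * z) * (1 + Real.exp (-α * z)) ^ β ≤
        a' * Real.exp (-α * z) * (Real.exp (-α * z)) ^ β := by
      have := mul_pos ha' (hupos z)
      nlinarith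
    refine h2.trans_eq ?_
    rw [← Real.exp_mul, mul_assoc, ← Real.exp_add]
    congr 1
    ring
  -- continuity
  have hcont : Continuous ρ := by
    have : Continuous fun z : ℝ => a' * Real.exp (-α * z) *
        (1 + Real.exp (-α * z)) ^ β := by
      apply Continuous.mul
      · exact continuous_const.mul (Real.continuous_exp.comp (continuous_const.mul continuous_id))
      · apply Continuous.rpow_const
        · exact continuous_const.add (Real.continuous_exp.comp (continuous_const.mul continuous_id))
        · exact fun z => Or.inl (hbne z)
    exact this.congr fun z => (hρ z).symm
  -- integrability
  have hk : 0 < -α * (1 + β) := by nlinarith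
  have hint : Integrable ρ := by
    rw [← integrableOn_univ, ← Set.Iic_union_Ici (a := (0:ℝ)), integrableOn_union]
    constructor
    · -- on Iic 0, dominate by a' * exp ((-α*(1+β)) * z)
      have hg : IntegrableOn (fun z : ℝ => a' * Real.exp ((-α * (1 + β)) * z)) (Set.Iic 0) := by
        have h1 : IntegrableOn (fun z : ℝ => a' * Real.exp (-(-α * (1 + β)) * z))
            (Set.Ici 0) := by
          rw [integrableOn_Ici_iff_integrableOn_Ioi]
          exact (exp_neg_integrableOn_Ioi 0 hk).const_mul a'
        rw [← (Measure.measurePreserving_neg (volume : Measure ℝ)).integrableOn_comp_preimage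
            (Homeomorph.neg ℝ).measurableEmbedding]
        simp only [Function.comp_def, Set.neg_preimage, Set.neg_Iic, neg_zero]
        refine h1.congr_fun (fun x _ => ?_) measurableSet_Ici
        ring_nf
      refine Integrable.mono' hg (hcont.aestronglyMeasurable.restrict) ?_
      filter_upwards [ae_restrict_mem measurableSet_Iic] with z _
      rw [Real.norm_eq_abs, abs_of_pos (hpos z)]
      exact hbound2 z
    · -- on Ici 0, dominate by a' * exp (-α * z)
      have hg : IntegrableOn (fun z : ℝ => a' * Real.exp (-α * z)) (Set.Ici 0) := by
        rw [integrableOn_Ici_iff_integrableOn_Ioi]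
        exact (exp_neg_integrableOn_Ioi 0 hαpos).const_mul a'
      refine Integrable.mono' hg (hcont.aestronglyMeasurable.restrict) ?_
      filter_upwards [ae_restrict_mem measurableSet_Ici] with z _
      rw [Real.norm_eq_abs, abs_of_pos (hpos z)]
      exact hbound1 z
  -- limits
  have htop : Tendsto ρ atTop (nhds 0) := by
    have h2 : Tendsto (fun z : ℝ => -α * z) atTop atBot :=
      Tendsto.const_mul_atTop_of_neg (neg_lt_zero.mpr hαpos) tendsto_id
    have h1 : Tendsto (fun z : ℝ => a' * Real.exp (-α * z)) atTop (nhds 0) := by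
      have := (Real.tendsto_exp_atBot.comp h2).const_mul a'
      simpa using this
    exact squeeze_zero (fun z => (hpos z).le) hbound1 h1
  have hbot : Tendsto ρ atBot (nhds 0) := by
    have h2 : Tendsto (fun z : ℝ => (-α * (1 + β)) * z) atBot atBot :=
      Tendsto.const_mul_atBot hk tendsto_id
    have h1 : Tendsto (fun z : ℝ => a' * Real.exp ((-α * (1 + β)) * z)) atBot (nhds 0) := by
      have := (Real.tendsto_exp_atBot.comp h2).const_mul a'
      simpa using this
    exact squeeze_zero (fun z => (hpos z).le) hbound2 h1
  refine ⟨hpos, hint, hbot, htop, ?_⟩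
  intro z
  have hρfun : ρ = fun z : ℝ => a' * Real.exp (-α * z) * (1 + Real.exp (-α * z)) ^ β :=
    funext hρ
  have hSfun : S = fun z : ℝ => S_init * (1 + Real.exp (-α * z)) ^ (d / (d - χ)) :=
    funext hS
  set u : ℝ := Real.exp (-α * z) with hu_def
  have hu : HasDerivAt (fun z : ℝ => Real.exp (-α * z)) (-α * u) z := by
    have h0 : HasDerivAt (fun z : ℝ => -α * z) (-α) z := by
      simpa using (hasDerivAt_id z).const_mul (-α)
    simpa [hu_def, mul_comm] using h0.exp
  have hb : HasDerivAt (fun z : ℝ => 1 + Real.exp (-α * z)) (-α * u) z := hu.const_add 1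
  have hbβ : HasDerivAt (fun z : ℝ => (1 + Real.exp (-α * z)) ^ β)
      (β * (1 + u) ^ (β - 1) * (-α * u)) z := by
    have := hb.rpow_const (p := β) (Or.inl (hbne z))
    convert this using 1
    ring
  have hbγ : HasDerivAt (fun z : ℝ => (1 + Real.exp (-α * z)) ^ (d / (d - χ)))
      ((d / (d - χ)) * (1 + u) ^ (d / (d - χ) - 1) * (-α * u)) z := by
    have := hb.rpow_const (p := d / (d - χ)) (Or.inl (hbne z))
    convert this using 1
    ring
  have hρ' : HasDerivAt ρ (a' * (-α * u) * (1 + u) ^ β +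
      a' * u * (β * (1 + u) ^ (β - 1) * (-α * u))) z := by
    rw [hρfun]
    exact (hu.const_mul a').mul hbβ
  have hS' : HasDerivAt S (S_init * ((d / (d - χ)) * (1 + u) ^ (d / (d - χ) - 1) * (-α * u))) z := by
    rw [hSfun]
    exact hbγ.const_mul S_init
  have e1 : (1 + u) ^ β = (1 + u) ^ (β - 1) * (1 + u) := by
    rw [Real.rpow_sub_one (hbne z), div_mul_cancel₀ _ (hbne z)]
  have e2 : (1 + u) ^ (d / (d - χ)) = (1 + u) ^ (d / (d - χ) - 1) * (1 + u) := by
    rw [Real.rpow_sub_one (hbne z), div_mul_cancel₀ _ (hbne z)]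
  rw [hρ z, hS z, hρ'.deriv, hS'.deriv, ← hu_def, e1, e2, hβdef, hα]
  have hbz : (1 : ℝ) + u ≠ 0 := hbne z
  set B1 : ℝ := (1 + u) ^ (χ / (d - χ) - 1) with hB1
  set B2 : ℝ := (1 + u) ^ (d / (d - χ) - 1) with hB2
  have hB2ne : B2 ≠ 0 := (Real.rpow_pos_of_pos (hbpos z) _).ne'
  field_simp
  ring
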